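/- arXiv:1112.4406 — 2 statements merged into one kernel-verified Lean document; each statement's English description precedes it below -/
import Mathlib

section
/- Let U₁, U₂, U₃ be n-point extensions with bases T₁, T₂, T₃, and define U ⤳ U' to mean some speedup of U relative to its base is relatively isomorphic to U'. Then ⤳ is transitive: if U₁ ⤳ U₂ and U₂ ⤳ U₃, then U₁ ⤳ U₃. -/
open MeasureTheory

/-- `U ⤳ U'` for `n`-point extensions: some speedup of the extension `U` relative to
its base `T` is relatively isomorphic to `U'`.  The relative isomorphism is recorded
at the level of bases and cocycle generators: there are a measurable `p : X → ℕ`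
(`p ≥ 1`), a measure isomorphism `φ` from the speedup `T^p` to `T'`, and a measurable
`α : X → S_n` conjugating the sped-up cocycle generator `x ↦ σ(x, p(x))` to `σ'`. -/
def Leads {X X' : Type*} [MeasurableSpace X] [MeasurableSpace X'] {n : ℕ}
    (μ : Measure X) (μ' : Measure X') (T : Equiv.Perm X) (T' : Equiv.Perm X')
    (σ : X → ℤ → Equiv.Perm (Fin n)) (σ' : X' → ℤ → Equiv.Perm (Fin n)) : Prop :=
  ∃ p : X → ℕ, Measurable p ∧ (∀ x, 1 ≤ p x) ∧
    ∃ φ : X → X', ∃ ψ : X' → X,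
      MeasurePreserving φ μ μ' ∧ MeasurePreserving ψ μ' μ ∧
      (∀ᵐ x ∂μ, ψ (φ x) = x) ∧ (∀ᵐ y ∂μ', φ (ψ y) = y) ∧
      (∀ᵐ x ∂μ, φ ((T ^ (p x : ℤ)) x) = T' (φ x)) ∧
      ∃ α : X → Equiv.Perm (Fin n),
        (∀ π : Equiv.Perm (Fin n), MeasurableSet {x | α x = π}) ∧
        ∀ᵐ x ∂μ, σ' (φ x) 1 = α ((T ^ (p x : ℤ)) x) * σ x (p x : ℤ) * (α x)⁻¹

lemma mp_perm_zpow {X : Type*} [MeasurableSpace X] {μ : Measure X} {T : Equiv.Perm X}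
    (hT : MeasurePreserving T μ μ) (k : ℕ) : MeasurePreserving (⇑(T ^ (k : ℤ))) μ μ := by
  rw [zpow_natCast, ← Equiv.Perm.iterate_eq_pow]
  exact hT.iterate k

/-- Applying a measurable `ℕ`-indexed family of measurable maps at a measurable index
is measurable. -/
lemma measurable_nat_piece {X Y : Type*} [MeasurableSpace X] [MeasurableSpace Y]
    {f : ℕ → X → Y} (hf : ∀ k, Measurable (f k)) {p : X → ℕ} (hp : Measurable p) :
    Measurable fun x => f (p x) x := by
  intro s hs
  have h : (fun x => f (p x) x) ⁻¹' s = ⋃ k, (p ⁻¹' {k}) ∩ (f k ⁻¹' s) := by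
    ext x
    simp only [Set.mem_preimage, Set.mem_iUnion, Set.mem_inter_iff, Set.mem_singleton_iff]
    constructor
    · intro h; exact ⟨p x, rfl, h⟩
    · rintro ⟨k, hk, h⟩; rw [hk]; exact h
  rw [h]
  exact MeasurableSet.iUnion fun k => (hp (measurableSet_singleton k)).inter (hf k hs)

/-- An a.e. property can be pulled back along a variable-speed power of a
measure-preserving permutation. -/
lemma ae_comp_speedup {X : Type*} [MeasurableSpace X] {μ : Measure X} {T : Equiv.Perm X}
    (hT : MeasurePreserving T μ μ) (p : X → ℕ) {P : X → Prop}
    (hP : ∀ᵐ x ∂μ, P x) : ∀ᵐ x ∂μ, P ((T ^ (p x : ℤ)) x) := by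
  obtain ⟨N, hsub, hNm, hN0⟩ := exists_measurable_superset_of_null (ae_iff.mp hP)
  rw [ae_iff]
  have hsub2 : {x | ¬P ((T ^ (p x : ℤ)) x)} ⊆ ⋃ k : ℕ, (⇑(T ^ (k : ℤ))) ⁻¹' N :=
    fun x hx => Set.mem_iUnion.mpr ⟨p x, hsub hx⟩
  refine measure_mono_null hsub2 (measure_iUnion_null fun k => ?_)
  rw [(mp_perm_zpow hT k).measure_preimage hNm.nullMeasurableSet]
  exact hN0

/-- The relation `⤳` on `n`-point extensions is transitive. -/
theorem leads_trans
    {X₁ X₂ X₃ : Type*} [MeasurableSpace X₁] [MeasurableSpace X₂] [MeasurableSpace X₃]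
    {n : ℕ}
    (μ₁ : Measure X₁) [IsProbabilityMeasure μ₁]
    (μ₂ : Measure X₂) [IsProbabilityMeasure μ₂]
    (μ₃ : Measure X₃) [IsProbabilityMeasure μ₃]
    (T₁ : Equiv.Perm X₁) (T₂ : Equiv.Perm X₂) (T₃ : Equiv.Perm X₃)
    (hT₁ : MeasurePreserving T₁ μ₁ μ₁) (hT₂ : MeasurePreserving T₂ μ₂ μ₂)
    (hT₃ : MeasurePreserving T₃ μ₃ μ₃)
    (σ₁ : X₁ → ℤ → Equiv.Perm (Fin n)) (σ₂ : X₂ → ℤ → Equiv.Perm (Fin n))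
    (σ₃ : X₃ → ℤ → Equiv.Perm (Fin n))
    (hσ₁ : ∀ x (m k : ℤ), σ₁ x (m + k) = σ₁ ((T₁ ^ k) x) m * σ₁ x k)
    (hσ₂ : ∀ x (m k : ℤ), σ₂ x (m + k) = σ₂ ((T₂ ^ k) x) m * σ₂ x k)
    (hσ₃ : ∀ x (m k : ℤ), σ₃ x (m + k) = σ₃ ((T₃ ^ k) x) m * σ₃ x k)
    (h12 : Leads μ₁ μ₂ T₁ T₂ σ₁ σ₂) (h23 : Leads μ₂ μ₃ T₂ T₃ σ₂ σ₃) :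
    Leads μ₁ μ₃ T₁ T₃ σ₁ σ₃ := by
  obtain ⟨p, hp, hp1, φ, ψ, hφ, hψ, hψφ, hφψ, hint, α, hα, hcoc⟩ := h12
  obtain ⟨q, hq, hq1, φ', ψ', hφ', hψ', hψφ', hφψ', hint', α', hα', hcoc'⟩ := h23
  -- the speedup map of the first extension
  set S : X₁ → X₁ := fun x => (T₁ ^ (p x : ℤ)) x with hSdef
  have hS : Measurable S :=
    measurable_nat_piece (f := fun k x => (T₁ ^ (k : ℤ)) x)
      (fun k => (mp_perm_zpow hT₁ k).measurable) hp
  -- σ₂/σ₁ vanish at time 0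
  have one1 : ∀ x, σ₁ x 0 = 1 := by
    intro x
    have h := hσ₁ x 0 0
    simp only [add_zero, zpow_zero, Equiv.Perm.coe_one, id_eq] at h
    exact mul_eq_left.mp h.symm
  have one2 : ∀ y, σ₂ y 0 = 1 := by
    intro y
    have h := hσ₂ y 0 0
    simp only [add_zero, zpow_zero, Equiv.Perm.coe_one, id_eq] at h
    exact mul_eq_left.mp h.symm
  -- total time of the composed speedup
  set r : X₁ → ℕ := fun x => ∑ i ∈ Finset.range (q (φ x)), p (S^[i] x) with hrdef
  have hr : Measurable r := by
    apply measurable_nat_piece (f := fun k x => ∑ i ∈ Finset.range k, p (S^[i] x))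
    · intro k
      exact Finset.measurable_sum _ fun i _ => hp.comp (hS.iterate i)
    · exact hq.comp hφ.measurable
  have hr1 : ∀ x, 1 ≤ r x := by
    intro x
    calc 1 ≤ p (S^[0] x) := hp1 x
      _ ≤ r x := Finset.single_le_sum (f := fun i => p (S^[i] x))
            (fun i _ => Nat.zero_le _) (Finset.mem_range.mpr (hq1 (φ x)))
  -- exact identity: the sum of speeds moves `x` to `S^[k] x`
  have key : ∀ (x : X₁) (k : ℕ),
      (T₁ ^ ((∑ i ∈ Finset.range k, p (S^[i] x) : ℕ) : ℤ)) x = S^[k] x := by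
    intro x k
    induction k with
    | zero => simp
    | succ k ih =>
      rw [Finset.sum_range_succ, Function.iterate_succ_apply', Nat.cast_add,
        add_comm ((∑ i ∈ Finset.range k, p (S^[i] x) : ℕ) : ℤ) ((p (S^[k] x) : ℕ) : ℤ),
        zpow_add, Equiv.Perm.mul_apply, ih]
  have keyr : ∀ x : X₁, (T₁ ^ (r x : ℤ)) x = S^[q (φ x)] x := fun x => key x (q (φ x))
  -- a.e. pullback along iterates of S
  have aeSk : ∀ (P : X₁ → Prop), (∀ᵐ x ∂μ₁, P x) → ∀ k, ∀ᵐ x ∂μ₁, P (S^[k] x) := by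
    intro P hP k
    induction k with
    | zero => simpa using hP
    | succ k ih =>
      have h := ae_comp_speedup hT₁ p (P := fun x => P (S^[k] x)) ih
      filter_upwards [h] with x hx
      rw [Function.iterate_succ_apply]
      exact hx
  -- restate the data of `h12` in terms of `S`
  have hintS : ∀ᵐ x ∂μ₁, φ (S x) = T₂ (φ x) := hint
  have hcocS : ∀ᵐ x ∂μ₁,
      σ₂ (φ x) 1 = α (S x) * σ₁ x (p x : ℤ) * (α x)⁻¹ := hcoc
  have hAll : ∀ᵐ x ∂μ₁, ∀ k : ℕ,
      φ (S (S^[k] x)) = T₂ (φ (S^[k] x)) ∧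
      σ₂ (φ (S^[k] x)) 1
        = α (S (S^[k] x)) * σ₁ (S^[k] x) (p (S^[k] x) : ℤ) * (α (S^[k] x))⁻¹ :=
    ae_all_iff.mpr fun k => aeSk _ (hintS.and hcocS) k
  have hB : ∀ᵐ x ∂μ₁,
      σ₃ (φ' (φ x)) 1
        = α' ((T₂ ^ (q (φ x) : ℤ)) (φ x)) * σ₂ (φ x) (q (φ x) : ℤ) * (α' (φ x))⁻¹ :=
    hφ.quasiMeasurePreserving.ae hcoc'
  have hC : ∀ᵐ x ∂μ₁, φ' ((T₂ ^ (q (φ x) : ℤ)) (φ x)) = T₃ (φ' (φ x)) :=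
    hφ.quasiMeasurePreserving.ae hint'
  -- main a.e. statement
  have hmain : ∀ᵐ x ∂μ₁,
      φ' (φ ((T₁ ^ (r x : ℤ)) x)) = T₃ (φ' (φ x)) ∧
      σ₃ (φ' (φ x)) 1
        = (α' (φ ((T₁ ^ (r x : ℤ)) x)) * α ((T₁ ^ (r x : ℤ)) x)) * σ₁ x (r x : ℤ) *
            (α' (φ x) * α x)⁻¹ := by
    filter_upwards [hAll, hB, hC] with x hx hBx hCx
    have claim : ∀ k : ℕ,
        φ (S^[k] x) = (T₂ ^ (k : ℤ)) (φ x) ∧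
        σ₂ (φ x) (k : ℤ)
          = α (S^[k] x) * σ₁ x ((∑ i ∈ Finset.range k, p (S^[i] x) : ℕ) : ℤ) * (α x)⁻¹ := by
      intro k
      induction k with
      | zero =>
        constructor
        · simp
        · simp [one1, one2]
      | succ k ih =>
        obtain ⟨ih1, ih2⟩ := ih
        have hstep := hx k
        constructor
        · rw [Function.iterate_succ_apply', hstep.1, ih1,
            show (((k + 1 : ℕ)) : ℤ) = 1 + (k : ℤ) by push_cast; ring,
            zpow_add, zpow_one, Equiv.Perm.mul_apply]
        · have hprod : σ₁ (S^[k] x) ((p (S^[k] x) : ℕ) : ℤ) * σ₁ x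
                ((∑ i ∈ Finset.range k, p (S^[i] x) : ℕ) : ℤ)
              = σ₁ x ((∑ i ∈ Finset.range (k + 1), p (S^[i] x) : ℕ) : ℤ) := by
            have h := hσ₁ x ((p (S^[k] x) : ℕ) : ℤ)
              ((∑ i ∈ Finset.range k, p (S^[i] x) : ℕ) : ℤ)
            rw [key x k] at h
            rw [← h, Finset.sum_range_succ, Nat.cast_add, add_comm]
          rw [show (((k + 1 : ℕ)) : ℤ) = 1 + (k : ℤ) by push_cast; ring,
            hσ₂ (φ x) 1 (k : ℤ), ← ih1, hstep.2, ih2,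
            Function.iterate_succ_apply', ← hprod]
          group
    obtain ⟨c1, c2⟩ := claim (q (φ x))
    have hrx : r x = ∑ i ∈ Finset.range (q (φ x)), p (S^[i] x) := rfl
    refine ⟨?_, ?_⟩
    · rw [keyr, c1]
      exact hCx
    · rw [keyr, hrx, hBx, c2, ← c1]
      group
  -- assemble
  refine ⟨r, hr, hr1, fun x => φ' (φ x), fun y => ψ (ψ' y),
    hφ'.comp hφ, hψ.comp hψ', ?_, ?_, ?_,
    fun x => α' (φ x) * α x, ?_, ?_⟩
  · have h1 : ∀ᵐ x ∂μ₁, ψ' (φ' (φ x)) = φ x := hφ.quasiMeasurePreserving.ae hψφ'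
    filter_upwards [h1, hψφ] with x hx hx2
    rw [hx, hx2]
  · have h2 : ∀ᵐ y ∂μ₃, φ (ψ (ψ' y)) = ψ' y := hψ'.quasiMeasurePreserving.ae hφψ
    filter_upwards [h2, hφψ'] with y hy hy2
    rw [hy, hy2]
  · filter_upwards [hmain] with x hx using hx.1
  · intro π
    have h : {x | α' (φ x) * α x = π}
        = ⋃ τ : Equiv.Perm (Fin n), ({x | α x = τ} ∩ φ ⁻¹' {y | α' y = π * τ⁻¹}) := by
      ext x
      simp only [Set.mem_setOf_eq, Set.mem_iUnion, Set.mem_inter_iff, Set.mem_preimage]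
      constructor
      · intro h
        exact ⟨α x, rfl, by rw [← h]; group⟩
      · rintro ⟨τ, h1, h2⟩
        rw [h1, h2]
        group
    rw [h]
    exact MeasurableSet.iUnion fun τ => (hα τ).inter (hφ.measurable (hα' _))
  · filter_upwards [hmain] with x hx using hx.2
end

section
/- If 𝒫 and 𝒫' are partitions of ℕ into two-element sets whose symmetric difference (as sets of blocks) is infinite, then no conjugate of G_𝒫 in S_f contains G_{𝒫'}: for every ξ ∈ S_f, G_{𝒫'} ⊄ ξ G_𝒫 ξ⁻¹. -/
/-- A permutation of `ℕ` is finitely supported if it moves only finitely many points. -/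
def FinSupp (π : Equiv.Perm ℕ) : Prop := {k : ℕ | π k ≠ k}.Finite

/-- A partition of `ℕ` into two-element sets. -/
def IsPairPartition (P : Set (Set ℕ)) : Prop :=
  (∀ A ∈ P, ∃ a b : ℕ, a ≠ b ∧ A = {a, b}) ∧
  (∀ A ∈ P, ∀ B ∈ P, A ≠ B → Disjoint A B) ∧
  ⋃₀ P = Set.univ

/-- `G_𝒫`: the finitely supported permutations of `ℕ` mapping each block of `𝒫`
onto a block of `𝒫`. -/
def GP (P : Set (Set ℕ)) : Set (Equiv.Perm ℕ) :=
  {π | FinSupp π ∧ ∀ A ∈ P, π '' A ∈ P}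

/-- Two blocks of a pair partition sharing a point are equal. -/
lemma blocks_eq_of_mem {P : Set (Set ℕ)} (hP : IsPairPartition P)
    {A B : Set ℕ} (hA : A ∈ P) (hB : B ∈ P) {x : ℕ} (hxA : x ∈ A) (hxB : x ∈ B) :
    A = B := by
  by_contra h
  exact (hP.2.1 A hA B hB h).le_bot ⟨hxA, hxB⟩ |>.elim

/-- A pair partition contained in another pair partition equals it. -/
lemma pairPartition_subset_eq {P Q : Set (Set ℕ)}
    (hP : IsPairPartition P) (hQ : IsPairPartition Q) (h : P ⊆ Q) : P = Q := by
  apply Set.Subset.antisymm h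
  intro B hB
  obtain ⟨a, b, hab, rfl⟩ := hQ.1 B hB
  have ha : a ∈ ⋃₀ P := by rw [hP.2.2]; trivial
  obtain ⟨A, hA, haA⟩ := ha
  have : A = {a, b} := blocks_eq_of_mem hQ (h hA) hB haA (by left; rfl)
  rwa [← this]

/-- The image of a pair partition under a permutation is a pair partition. -/
lemma image_pairPartition {P : Set (Set ℕ)} (hP : IsPairPartition P) (ξ : Equiv.Perm ℕ) :
    IsPairPartition ((ξ '' ·) '' P) := by
  refine ⟨?_, ?_, ?_⟩
  · rintro _ ⟨A, hA, rfl⟩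
    obtain ⟨a, b, hab, rfl⟩ := hP.1 A hA
    exact ⟨ξ a, ξ b, fun h => hab (ξ.injective h), by show ξ '' {a, b} = _; rw [Set.image_pair]⟩
  · rintro _ ⟨A, hA, rfl⟩ _ ⟨B, hB, rfl⟩ hne
    have : A ≠ B := fun h => hne (by rw [h])
    have := hP.2.1 A hA B hB this
    rw [Set.disjoint_iff_inter_eq_empty] at this ⊢
    rw [← Set.image_inter ξ.injective, this, Set.image_empty]
  · apply Set.eq_univ_of_forall
    intro x
    have : ξ.symm x ∈ ⋃₀ P := by rw [hP.2.2]; trivial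
    obtain ⟨A, hA, hxA⟩ := this
    exact ⟨ξ '' A, ⟨A, hA, rfl⟩, ⟨ξ.symm x, hxA, ξ.apply_symm_apply x⟩⟩

/-- A finitely supported permutation moves only finitely many blocks. -/
lemma symmDiff_image_finite {P : Set (Set ℕ)} (hP : IsPairPartition P)
    {ξ : Equiv.Perm ℕ} (hξ : FinSupp ξ) :
    ((P \ (ξ '' ·) '' P) ∪ ((ξ '' ·) '' P \ P)).Finite := by
  set S := {k : ℕ | ξ k ≠ k} with hS
  set T := {A | A ∈ P ∧ (A ∩ S).Nonempty} with hT
  have hTfin : T.Finite := by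
    have : T ⊆ ⋃ s ∈ S, {A | A ∈ P ∧ s ∈ A} := by
      rintro A ⟨hA, s, hsA, hsS⟩
      exact Set.mem_biUnion hsS ⟨hA, hsA⟩
    refine Set.Finite.subset (Set.Finite.biUnion hξ fun s _ => ?_) this
    apply Set.Subsingleton.finite
    rintro A ⟨hA, hsA⟩ B ⟨hB, hsB⟩
    exact blocks_eq_of_mem hP hA hB hsA hsB
  have key : ∀ A ∈ P, A ∉ T → ξ '' A = A := by
    rintro A hA hAT
    have : ∀ x ∈ A, ξ x = x := by
      intro x hx
      by_contra h
      exact hAT ⟨hA, x, hx, h⟩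
    apply Set.Subset.antisymm
    · rintro _ ⟨x, hx, rfl⟩; rwa [this x hx]
    · intro x hx; exact ⟨x, hx, this x hx⟩
  apply Set.Finite.union
  · refine Set.Finite.subset hTfin ?_
    rintro A ⟨hA, hA'⟩
    by_contra h
    exact hA' ⟨A, hA, key A hA h⟩
  · refine Set.Finite.subset (hTfin.image (ξ '' ·)) ?_
    rintro _ ⟨⟨A, hA, rfl⟩, hB⟩
    refine ⟨A, ⟨hA, ?_⟩, rfl⟩
    by_contra h
    apply hB
    show ξ '' A ∈ P
    rw [key A hA (fun ht => h ht.2)]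
    exact hA

/-- If `𝒫` and `𝒫'` are partitions of `ℕ` into two-element sets whose symmetric
difference (as sets of blocks) is infinite, then no conjugate of `G_𝒫` in `S_f`
contains `G_{𝒫'}`. -/
theorem no_conjugate_contains (P P' : Set (Set ℕ))
    (hP : IsPairPartition P) (hP' : IsPairPartition P')
    (hinf : ((P \ P') ∪ (P' \ P)).Infinite) :
    ∀ ξ : Equiv.Perm ℕ, FinSupp ξ → ¬ (GP P' ⊆ (fun π => ξ * π * ξ⁻¹) '' GP P) := by
  intro ξ hξ hsub
  -- Claim: every block of P' is in ξ '' P.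
  have main : ∀ A ∈ P', A ∈ (ξ '' ·) '' P := by
    intro A hA
    obtain ⟨a, b, hab, rfl⟩ := hP'.1 A hA
    -- the swap of a and b is in GP P'
    have hswap : Equiv.swap a b ∈ GP P' := by
      constructor
      · apply Set.Finite.subset ((Set.finite_singleton b).insert a)
        intro x hx
        by_contra h
        simp only [Set.mem_insert_iff, Set.mem_singleton_iff, not_or] at h
        exact hx (Equiv.swap_apply_of_ne_of_ne h.1 h.2)
      · intro B hB
        by_cases hBab : B = {a, b}
        · subst hBab
          have : Equiv.swap a b '' {a, b} = {b, a} := by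
            rw [Set.image_pair, Equiv.swap_apply_left, Equiv.swap_apply_right]
          rw [this, Set.pair_comm]; exact hA
        · have hfix : ∀ x ∈ B, Equiv.swap a b x = x := by
            intro x hx
            have hxa : x ≠ a := fun h => hBab (blocks_eq_of_mem hP' hB hA (h ▸ hx) (by left; rfl))
            have hxb : x ≠ b := fun h => hBab (blocks_eq_of_mem hP' hB hA (h ▸ hx) (by right; rfl))
            exact Equiv.swap_apply_of_ne_of_ne hxa hxb
          have : Equiv.swap a b '' B = B := by
            apply Set.Subset.antisymm
            · rintro _ ⟨x, hx, rfl⟩; rwa [hfix x hx]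
            · intro x hx; exact ⟨x, hx, hfix x hx⟩
          rwa [this]
    obtain ⟨σ, hσ, hconj⟩ := hsub hswap
    -- σ = swap (ξ⁻¹ a) (ξ⁻¹ b)
    have hσeq : σ = Equiv.swap (ξ⁻¹ a) (ξ⁻¹ b) := by
      have := Equiv.swap_apply_apply ξ⁻¹ a b
      rw [← hconj] at this
      rw [this]; group
    set u := ξ⁻¹ a with hu
    set v := ξ⁻¹ b with hv
    have huv : u ≠ v := fun h => hab (ξ⁻¹.injective h)
    -- the block of P containing u
    have hu' : u ∈ ⋃₀ P := by rw [hP.2.2]; trivial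
    obtain ⟨C, hC, huC⟩ := hu'
    obtain ⟨c, d, hcd, rfl⟩ := hP.1 C hC
    -- show {u, v} ∈ P
    have huvP : ({u, v} : Set ℕ) ∈ P := by
      by_contra hnP
      -- wlog-ish: u is one of c, d; get the other point e ≠ v
      obtain ⟨e, heC, heu, hC'⟩ : ∃ e, e ∈ ({c, d} : Set ℕ) ∧ e ≠ u ∧ ({c, d} : Set ℕ) = {u, e} := by
        rcases huC with h | h
        · refine ⟨d, by right; rfl, ?_, by rw [h]⟩
          intro hh; apply hcd; rw [hh, h]
        · rw [Set.mem_singleton_iff] at h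
          refine ⟨c, by left; rfl, ?_, by rw [h, Set.pair_comm]⟩
          intro hh; apply hcd; rw [hh, h]
      have hev : e ≠ v := by
        intro h
        exact hnP (h ▸ hC' ▸ hC)
      -- σ '' {c,d} = {v, e} ∈ P, shares e with {c,d}, so equal: contradiction
      have himg : σ '' {c, d} ∈ P := hσ.2 _ hC
      have : σ '' ({c, d} : Set ℕ) = {v, e} := by
        rw [hC', Set.image_pair, hσeq, Equiv.swap_apply_left,
          Equiv.swap_apply_of_ne_of_ne heu hev]
      rw [this] at himg
      have := blocks_eq_of_mem hP himg hC (x := e) (by right; rfl) (hC' ▸ by right; rfl)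
      rw [hC'] at this
      have hvmem : v ∈ ({u, e} : Set ℕ) := this ▸ (by left; rfl)
      rcases hvmem with h | h
      · exact huv h.symm
      · exact hev h.symm
    refine ⟨{u, v}, huvP, ?_⟩
    show ξ '' {u, v} = _
    rw [Set.image_pair, hu, hv]
    simp [Equiv.Perm.inv_def]
  -- hence P' = ξ '' P, so the symmetric difference is finite: contradiction
  have hPeq : P' = (ξ '' ·) '' P :=
    pairPartition_subset_eq hP' (image_pairPartition hP ξ) main
  rw [hPeq] at hinf
  exact hinf (symmDiff_image_finite hP hξ)
end
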